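/- Let F be easy to optimize and let the iterates x_k be generated by the aProx iteration with a model satisfying conditions (C.i), (C.ii), and (C.iii). Then for every x* ∈ X* and every subgradient g_k ∈ ∂f_{x_k}(x_k;S_k) of the model at x_k (hence g_k ∈ ∂f(x_k;S_k)), (1/2)‖x_{k+1} − x*‖² ≤ (1/2)‖x_k − x*‖² − (1/2)[f(x_k;S_k) − f(x*;S_k)] · min{ α_k, (f(x_k;S_k) − f(x*;S_k))/‖g_k‖² }. -/

import Mathlib

open MeasureTheory ProbabilityTheory Filter Metric
open scoped RealInnerProductSpace ENNReal NNReal Topology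

noncomputable section

/-- `g` is a subgradient of `h` at `x`, relative to the set `X`. -/
def IsSubgradAt {n : ℕ} (X : Set (EuclideanSpace ℝ (Fin n)))
    (h : EuclideanSpace ℝ (Fin n) → ℝ) (x g : EuclideanSpace ℝ (Fin n)) : Prop :=
  ∀ y ∈ X, h x + ⟪g, y - x⟫ ≤ h y

/-- `h` is subdifferentiable on `X`. -/
def SubdiffableOn {n : ℕ} (X : Set (EuclideanSpace ℝ (Fin n)))
    (h : EuclideanSpace ℝ (Fin n) → ℝ) : Prop :=
  ∀ x ∈ X, ∃ g, IsSubgradAt X h x g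

/-- `x₁` minimizes `h(y) + ‖y - x₀‖²/(2α)` over `y ∈ X`. -/
def IsProxStep {n : ℕ} (X : Set (EuclideanSpace ℝ (Fin n)))
    (h : EuclideanSpace ℝ (Fin n) → ℝ) (x₀ : EuclideanSpace ℝ (Fin n)) (α : ℝ)
    (x₁ : EuclideanSpace ℝ (Fin n)) : Prop :=
  x₁ ∈ X ∧ ∀ y ∈ X, h x₁ + ‖x₁ - x₀‖ ^ 2 / (2 * α) ≤ h y + ‖y - x₀‖ ^ 2 / (2 * α)

/-- Lemma 4.1 (shared-min progress): if `F` is easy to optimize and the model satisfies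
(C.i)–(C.iii), then for every `x* ∈ X*` and every subgradient `g ∈ ∂f_{x_k}(x_k; S_k)` of
the model at `x_k` (hence `g ∈ ∂f(x_k; S_k)`), almost surely
`½‖x_{k+1} - x*‖² ≤ ½‖x_k - x*‖²
  - ½ (f(x_k;S_k) - f(x*;S_k)) min{α_k, (f(x_k;S_k) - f(x*;S_k))/‖g‖²}`. -/
lemma norm_combo_sq {n : ℕ} (a b : EuclideanSpace ℝ (Fin n)) (t : ℝ) :
    ‖(1 - t) • a + t • b‖ ^ 2
      = (1 - t) * ‖a‖ ^ 2 + t * ‖b‖ ^ 2 - t * (1 - t) * ‖a - b‖ ^ 2 := by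
  have h1 := norm_add_sq_real ((1 - t) • a) (t • b)
  have h2 := norm_sub_sq_real a b
  have h3 : ⟪(1 - t) • a, t • b⟫ = (1 - t) * (t * ⟪a, b⟫) := by
    rw [real_inner_smul_left, real_inner_smul_right]
  have h4 : ‖(1 - t) • a‖ ^ 2 = (1 - t) ^ 2 * ‖a‖ ^ 2 := by
    rw [norm_smul, mul_pow, Real.norm_eq_abs, sq_abs]
  have h5 : ‖t • b‖ ^ 2 = t ^ 2 * ‖b‖ ^ 2 := by
    rw [norm_smul, mul_pow, Real.norm_eq_abs, sq_abs]
  rw [h1, h3, h4, h5, h2]; ring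

lemma prox_ineq {n : ℕ} {X : Set (EuclideanSpace ℝ (Fin n))} (hX : Convex ℝ X)
    {h : EuclideanSpace ℝ (Fin n) → ℝ} (hconv : ConvexOn ℝ X h)
    {x₀ x₁ z : EuclideanSpace ℝ (Fin n)} {α : ℝ} (hα : 0 < α)
    (hp : IsProxStep X h x₀ α x₁) (hz : z ∈ X) :
    h x₁ + ‖x₁ - x₀‖ ^ 2 / (2 * α) + ‖z - x₁‖ ^ 2 / (2 * α)
      ≤ h z + ‖z - x₀‖ ^ 2 / (2 * α) := by
  obtain ⟨hx₁, hmin⟩ := hp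
  have hA : (0:ℝ) < 2 * α := by linarith
  set K := ‖z - x₁‖ ^ 2 / (2 * α) with hK
  have hK0 : 0 ≤ K := by positivity
  have key : ∀ t : ℝ, 0 < t → t < 1 →
      h x₁ + ‖x₁ - x₀‖ ^ 2 / (2 * α) + (1 - t) * K
        ≤ h z + ‖z - x₀‖ ^ 2 / (2 * α) := by
    intro t ht ht1
    set y := (1 - t) • x₁ + t • z with hy
    have hyX : y ∈ X := hX hx₁ hz (by linarith) ht.le (by ring)
    have h1 := hmin y hyX
    have h2 : h y ≤ (1 - t) * h x₁ + t * h z :=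
      hconv.2 hx₁ hz (by linarith) ht.le (by ring)
    have h3 : ‖y - x₀‖ ^ 2
        = (1 - t) * ‖x₁ - x₀‖ ^ 2 + t * ‖z - x₀‖ ^ 2
          - t * (1 - t) * ‖x₁ - z‖ ^ 2 := by
      have : y - x₀ = (1 - t) • (x₁ - x₀) + t • (z - x₀) := by
        rw [hy]; module
      rw [this, norm_combo_sq]
      congr 3
      abel
    have h4 : ‖x₁ - z‖ = ‖z - x₁‖ := norm_sub_rev _ _
    rw [h3, h4] at h1
    have h5 : t * (h x₁ + ‖x₁ - x₀‖ ^ 2 / (2 * α) + (1 - t) * K)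
        ≤ t * (h z + ‖z - x₀‖ ^ 2 / (2 * α)) := by
      have e1 : ((1 - t) * ‖x₁ - x₀‖ ^ 2 + t * ‖z - x₀‖ ^ 2
          - t * (1 - t) * ‖z - x₁‖ ^ 2) / (2 * α)
          = (1 - t) * (‖x₁ - x₀‖ ^ 2 / (2 * α)) + t * (‖z - x₀‖ ^ 2 / (2 * α))
            - t * ((1 - t) * K) := by
        rw [hK]; field_simp
      rw [e1] at h1
      nlinarith [h1, h2]
    exact le_of_mul_le_mul_left h5 ht
  refine le_of_forall_sub_le (fun ε hε => ?_)
  rcases le_or_gt K ε with hKε | hKε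
  · have := key (1/2) (by norm_num) (by norm_num)
    linarith
  · have hKpos : 0 < K := lt_trans hε hKε
    have hεK : 0 < ε / K := div_pos hε hKpos
    have ht1 : ε / K < 1 := (div_lt_one hKpos).2 hKε
    have := key (ε / K) hεK ht1
    have e : (1 - ε / K) * K = K - ε := by
      field_simp
    rw [e] at this
    linarith

lemma arith_lemma (A D G r : ℝ) (hA : 0 < A) (hD : 0 ≤ D) (hG : 0 ≤ G) (hr : 0 ≤ r) :
    (1/2) * D * min A (D / G ^ 2) ≤ A * max 0 (D - G * r) + (1/2) * r ^ 2 := by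
  have hmax0 : (0:ℝ) ≤ max 0 (D - G * r) := le_max_left _ _
  have hRHS : 0 ≤ A * max 0 (D - G * r) + (1/2) * r ^ 2 := by
    have := mul_nonneg hA.le hmax0; nlinarith [sq_nonneg r]
  rcases eq_or_lt_of_le hG with hG0 | hGpos
  · subst hG0
    rw [show (0:ℝ) ^ 2 = 0 by norm_num, div_zero, min_eq_right hA.le]
    linarith [hRHS]
  rcases eq_or_lt_of_le hD with hD0 | hDpos
  · subst hD0
    linarith [hRHS]
  have hG2 : 0 < G ^ 2 := by positivity
  rcases le_total A (D / G ^ 2) with hm | hm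
  · rw [min_eq_left hm]
    have hAG2 : A * G ^ 2 ≤ D := by
      rw [le_div_iff₀ hG2] at hm; linarith
    rcases le_total (D - G * r) 0 with hc | hc
    · rw [max_eq_left hc]
      have h1 : A * G ≤ r := by
        have h2 : A * G * G ≤ r * G := by nlinarith
        exact le_of_mul_le_mul_right (by nlinarith) hGpos
      nlinarith [mul_nonneg (mul_nonneg hA.le hGpos.le) hr]
    · rw [max_eq_right hc]
      nlinarith [sq_nonneg (A * G - r), mul_le_mul_of_nonneg_left hAG2 hA.le]
  · rw [min_eq_right hm]
    have hDAG : D ≤ A * G ^ 2 := by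
      rw [div_le_iff₀ hG2] at hm; linarith
    have e : (1/2) * D * (D / G ^ 2) = (D * D) / (2 * G ^ 2) := by
      field_simp
    rw [e, div_le_iff₀ (by positivity : (0:ℝ) < 2 * G ^ 2)]
    rcases le_total (D - G * r) 0 with hc | hc
    · rw [max_eq_left hc]
      nlinarith [sq_nonneg (D - G * r), mul_nonneg hr hGpos.le]
    · rw [max_eq_right hc]
      nlinarith [sq_nonneg (D - G * r), mul_nonneg (sub_nonneg.2 hDAG) hc]

theorem stmt10
    {n : ℕ} {𝕊 : Type*} [m𝕊 : MeasurableSpace 𝕊]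
    {Ω : Type*} [mΩ : MeasurableSpace Ω] (μ : Measure Ω) [IsProbabilityMeasure μ]
    (ν : Measure 𝕊) [IsProbabilityMeasure ν]
    -- the instantaneous objectives
    (X : Set (EuclideanSpace ℝ (Fin n))) (hXcl : IsClosed X) (hXconv : Convex ℝ X)
    (f : EuclideanSpace ℝ (Fin n) → 𝕊 → ℝ)
    (hfconv : ∀ s, ConvexOn ℝ X (fun z => f z s))
    (hfsub : ∀ s, SubdiffableOn X (fun z => f z s))
    (hfint : ∀ z, Integrable (fun s => f z s) ν)
    -- the model, satisfying conditions (C.i) and (C.ii)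
    (fm : EuclideanSpace ℝ (Fin n) → 𝕊 → EuclideanSpace ℝ (Fin n) → ℝ)
    (hmconv : ∀ z s, ConvexOn ℝ X (fm z s))
    (hmsub : ∀ z s, SubdiffableOn X (fm z s))
    (hmeq : ∀ z ∈ X, ∀ s, fm z s z = f z s)
    (hmle : ∀ z ∈ X, ∀ s, ∀ y, fm z s y ≤ f y s)
    -- the set of minimizers of F(x) = E[f(x;S)] over X
    (Xstar : Set (EuclideanSpace ℝ (Fin n)))
    (hXstar : Xstar = {z | z ∈ X ∧ ∀ y ∈ X, (∫ s, f z s ∂ν) ≤ ∫ s, f y s ∂ν})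
    (hXstarne : Xstar.Nonempty)
    -- Condition (C.iii): the model is bounded below by the infimum of f(·;s) over X
    (hmlow : ∀ z ∈ X, ∀ s, ∀ y, sInf ((fun w => f w s) '' X) ≤ fm z s y)
    -- F is easy to optimize: the minimizers are shared for P-almost every sample
    (heasy : ∀ z ∈ Xstar, ∀ᵐ s ∂ν, ∀ y ∈ X, f z s ≤ f y s)
    -- stepsizes, i.i.d. samples, and aProx iterates
    (α : ℕ → ℝ) (hαpos : ∀ k, 0 < α k)
    (S : ℕ → Ω → 𝕊) (hSmeas : ∀ k, Measurable (S k))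
    (hSiid : iIndepFun S μ)
    (hSlaw : ∀ k, Measure.map (S k) μ = ν)
    (x : ℕ → Ω → EuclideanSpace ℝ (Fin n))
    (hxmeas : ∀ k, Measurable (x k))
    (x₁ : EuclideanSpace ℝ (Fin n)) (hx₁X : x₁ ∈ X) (hxinit : ∀ ω, x 1 ω = x₁)
    (hupdate : ∀ k, 1 ≤ k → ∀ ω,
      IsProxStep X (fm (x k ω) (S k ω)) (x k ω) (α k) (x (k + 1) ω))
    :
    ∀ k, 1 ≤ k →
      ∀ᵐ ω ∂μ, ∀ z ∈ Xstar, ∀ g,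
        IsSubgradAt X (fm (x k ω) (S k ω)) (x k ω) g →
          (1 / 2) * ‖x (k + 1) ω - z‖ ^ 2 ≤
            (1 / 2) * ‖x k ω - z‖ ^ 2 -
              (1 / 2) * (f (x k ω) (S k ω) - f z (S k ω)) *
                min (α k) ((f (x k ω) (S k ω) - f z (S k ω)) / ‖g‖ ^ 2) := by
  intro k hk
  have hxX : ∀ m, 1 ≤ m → ∀ ω, x m ω ∈ X := by
    intro m hm
    induction m, hm using Nat.le_induction with
    | base => intro ω; rw [hxinit ω]; exact hx₁X
    | succ m hm ih => intro ω; exact (hupdate m hm ω).1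
  have hXne : X.Nonempty := ⟨x₁, hx₁X⟩
  have hXstarX : Xstar ⊆ X := by
    rw [hXstar]; exact fun z hz => hz.1
  have hsep : TopologicalSpace.IsSeparable Xstar :=
    TopologicalSpace.IsSeparable.of_separableSpace _
  obtain ⟨D, hDsub, hDcnt, hDdense⟩ := hsep.exists_countable_dense_subset
  have hae_s : ∀ᵐ t ∂ν, ∀ d ∈ D, f d t = sInf ((fun w => f w t) '' X) := by
    rw [ae_ball_iff hDcnt]
    intro d hd
    have hdX : d ∈ X := hXstarX (hDsub hd)
    filter_upwards [heasy d (hDsub hd)] with t ht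
    refine le_antisymm ?_ ?_
    · refine le_csInf (hXne.image _) ?_
      rintro b ⟨y, hy, rfl⟩
      exact ht y hy
    · have h := hmlow d hdX t d
      rwa [hmeq d hdX t] at h
  have hae : ∀ᵐ ω ∂μ, ∀ d ∈ D, f d (S k ω) = sInf ((fun w => f w (S k ω)) '' X) := by
    have h' : ∀ᵐ u ∂(Measure.map (S k) μ),
        ∀ d ∈ D, f d u = sInf ((fun w => f w u) '' X) := by
      rw [hSlaw k]; exact hae_s
    exact ae_of_ae_map (hSmeas k).aemeasurable h'
  filter_upwards [hae] with ω hω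
  intro z hz g hg
  have hzX : z ∈ X := hXstarX hz
  set t := S k ω with htdef
  set x₀ := x k ω with hx₀def
  set xn := x (k + 1) ω with hxndef
  have hx₀X : x₀ ∈ X := hxX k hk ω
  have hprox := hupdate k hk ω
  have hxnX : xn ∈ X := hprox.1
  set I := sInf ((fun w => f w t) '' X) with hIdef
  -- each minimizer attains the sample minimum
  have hfzI : f z t = I := by
    refine le_antisymm ?_ ?_
    · obtain ⟨gz, hgz⟩ := hfsub t z hzX
      refine le_of_forall_sub_le (fun ε hε => ?_)
      have hzcl : z ∈ closure D := hDdense hz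
      have hgz1 : (0:ℝ) < ‖gz‖ + 1 := by positivity
      obtain ⟨d, hdD, hdist⟩ :=
        Metric.mem_closure_iff.1 hzcl (ε / (‖gz‖ + 1)) (by positivity)
      have hdX : d ∈ X := hXstarX (hDsub hdD)
      have h1 : f z t + ⟪gz, d - z⟫ ≤ f d t := hgz d hdX
      rw [hω d hdD] at h1
      have h2 : |⟪gz, d - z⟫| ≤ ‖gz‖ * ‖d - z‖ := abs_real_inner_le_norm _ _
      have h4 : ‖gz‖ * ‖d - z‖ ≤ ε := by
        rw [show ‖d - z‖ = dist d z from (dist_eq_norm _ _).symm, dist_comm]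
        calc ‖gz‖ * dist z d ≤ (‖gz‖ + 1) * (ε / (‖gz‖ + 1)) := by
              apply mul_le_mul (by linarith) hdist.le dist_nonneg (by positivity)
          _ = ε := by field_simp
      have h5 : -ε ≤ ⟪gz, d - z⟫ := by
        have := neg_abs_le ⟪gz, d - z⟫; linarith
      linarith
    · have h := hmlow z hzX t z
      rwa [hmeq z hzX t] at h
  have hI_le_fx₀ : I ≤ f x₀ t := by
    have h := hmlow x₀ hx₀X t x₀
    rwa [hmeq x₀ hx₀X t] at h
  set Δ := f x₀ t - f z t with hΔdef
  have hΔ : 0 ≤ Δ := by rw [hΔdef, hfzI]; linarith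
  have key := prox_ineq hXconv (hmconv x₀ t) (hαpos k) hprox hzX
  have hlow : I ≤ fm x₀ t xn := hmlow x₀ hx₀X t xn
  have hub : fm x₀ t z ≤ f z t := hmle x₀ hx₀X t z
  have hsubg : f x₀ t + ⟪g, xn - x₀⟫ ≤ fm x₀ t xn := by
    have h := hg xn hxnX
    rwa [hmeq x₀ hx₀X t] at h
  have hcs : -(‖g‖ * ‖xn - x₀‖) ≤ ⟪g, xn - x₀⟫ := by
    have h1 := neg_abs_le ⟪g, xn - x₀⟫
    have h2 := abs_real_inner_le_norm g (xn - x₀)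
    linarith
  have hdiff : fm x₀ t z - fm x₀ t xn ≤ min 0 (‖g‖ * ‖xn - x₀‖ - Δ) := by
    refine le_min ?_ ?_
    · have : f z t = I := hfzI
      linarith
    · linarith
  have harith := arith_lemma (α k) Δ ‖g‖ ‖xn - x₀‖ (hαpos k) hΔ
    (norm_nonneg g) (norm_nonneg _)
  have hminmax : min 0 (‖g‖ * ‖xn - x₀‖ - Δ)
      = -(max 0 (Δ - ‖g‖ * ‖xn - x₀‖)) := by
    rcases le_total Δ (‖g‖ * ‖xn - x₀‖) with hc | hc
    · rw [min_eq_left (by linarith), max_eq_left (by linarith)]; ring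
    · rw [min_eq_right (by linarith), max_eq_right (by linarith)]; ring
  have h2A : (0:ℝ) < 2 * α k := by linarith [hαpos k]
  have key2 : ‖z - xn‖ ^ 2 ≤ ‖z - x₀‖ ^ 2
      + (2 * α k) * (fm x₀ t z - fm x₀ t xn) - ‖xn - x₀‖ ^ 2 := by
    have h := mul_le_mul_of_nonneg_right key h2A.le
    have e1 : (fm x₀ t xn + ‖xn - x₀‖ ^ 2 / (2 * α k) + ‖z - xn‖ ^ 2 / (2 * α k))
        * (2 * α k)
        = fm x₀ t xn * (2 * α k) + ‖xn - x₀‖ ^ 2 + ‖z - xn‖ ^ 2 := by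
      rw [add_mul, add_mul, div_mul_cancel₀ _ h2A.ne', div_mul_cancel₀ _ h2A.ne']
    have e2 : (fm x₀ t z + ‖z - x₀‖ ^ 2 / (2 * α k)) * (2 * α k)
        = fm x₀ t z * (2 * α k) + ‖z - x₀‖ ^ 2 := by
      rw [add_mul, div_mul_cancel₀ _ h2A.ne']
    rw [e1, e2] at h
    nlinarith [h]
  have hmul := mul_le_mul_of_nonneg_left hdiff h2A.le
  rw [hminmax] at hmul
  have hn1 : ‖xn - z‖ = ‖z - xn‖ := norm_sub_rev _ _
  have hn2 : ‖x₀ - z‖ = ‖z - x₀‖ := norm_sub_rev _ _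
  rw [hn1, hn2]
  linarith [key2, hmul, harith]
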